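/- Let W be a weak fundamental localizer. The class of W-exact squares is the smallest class of squares in Cat that is stable under horizontal composition, satisfies the local descent condition (CS3h), contains all comma squares, and contains every square of the form (top u : A → B with u W-coaspherical, left A → e, right B → e, bottom id_e, identity 2-cell). -/

import Mathlib

open CategoryTheory

universe u

namespace Paper

/-- A class of functors between small categories. -/
abbrev FunctorClass : Type (u + 1) :=
  ∀ ⦃A B : Type u⦄ [SmallCategory A] [SmallCategory B], (A ⥤ B) → Prop

/-- The punctual category `e`. -/
abbrev PtCat : Type u := Discrete PUnit.{u + 1}

/-- The category `A` is `W`-aspherical: the functor `A ⥤ e` lies in `W`. -/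
def IsAsphericalCat (W : FunctorClass.{u}) (A : Type u) [SmallCategory A] : Prop :=
  W (Functor.star A)

/-- The functor `F : A ⥤ B` is `W`-aspherical: every comma category `A/b` is `W`-aspherical. -/
def IsAsphericalFunctor (W : FunctorClass.{u}) {A B : Type u} [SmallCategory A]
    [SmallCategory B] (F : A ⥤ B) : Prop :=
  ∀ b : B, IsAsphericalCat W (CostructuredArrow F b)

/-- The functor `F : A ⥤ B` is `W`-coaspherical: every comma category `b\A` is `W`-aspherical. -/
def IsCoasphericalFunctor (W : FunctorClass.{u}) {A B : Type u} [SmallCategory A]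
    [SmallCategory B] (F : A ⥤ B) : Prop :=
  ∀ b : B, IsAsphericalCat W (StructuredArrow b F)

/-- For `F : A ⥤ B` and `b : B`, the induced functor `A/b ⥤ B/b`. -/
def sliceInduced {A B : Type u} [SmallCategory A] [SmallCategory B] (F : A ⥤ B) (b : B) :
    CostructuredArrow F b ⥤ Over b where
  obj x := Over.mk x.hom
  map {x y} f := Over.homMk (F.map f.left) (by simp [CostructuredArrow.w f])

/-- For a strictly commutative triangle given by `F : A ⥤ B`, `G : B ⥤ C` and `c : C`,
the induced functor `A/c ⥤ B/c`. -/
def triangleSlice {A B C : Type u} [SmallCategory A] [SmallCategory B] [SmallCategory C]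
    (F : A ⥤ B) (G : B ⥤ C) (c : C) :
    CostructuredArrow (F ⋙ G) c ⥤ CostructuredArrow G c where
  obj x := CostructuredArrow.mk (Y := F.obj x.left) x.hom
  map {x y} f := CostructuredArrow.homMk (F.map f.left) (CostructuredArrow.w f)

/-- For a strictly commutative triangle given by `F : A ⥤ B`, `G : B ⥤ C` and `c : C`,
the induced functor `c\A ⥤ c\B`. -/
def triangleCoslice {A B C : Type u} [SmallCategory A] [SmallCategory B] [SmallCategory C]
    (F : A ⥤ B) (G : B ⥤ C) (c : C) :
    StructuredArrow c (F ⋙ G) ⥤ StructuredArrow c G where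
  obj x := StructuredArrow.mk (Y := F.obj x.right) x.hom
  map {x y} f := StructuredArrow.homMk (F.map f.right) (StructuredArrow.w f)


/-- `W` is a weak fundamental localizer. -/
structure IsWeakFundamentalLocalizer (W : FunctorClass.{u}) : Prop where
  id_mem : ∀ (A : Type u) [SmallCategory A], W (𝟭 A)
  comp_mem : ∀ {A B C : Type u} [SmallCategory A] [SmallCategory B] [SmallCategory C]
      (F : A ⥤ B) (G : B ⥤ C), W F → W G → W (F ⋙ G)
  of_comp_left : ∀ {A B C : Type u} [SmallCategory A] [SmallCategory B] [SmallCategory C]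
      (F : A ⥤ B) (G : B ⥤ C), W F → W (F ⋙ G) → W G
  of_comp_right : ∀ {A B C : Type u} [SmallCategory A] [SmallCategory B] [SmallCategory C]
      (F : A ⥤ B) (G : B ⥤ C), W G → W (F ⋙ G) → W F
  retract_mem : ∀ {A A' : Type u} [SmallCategory A] [SmallCategory A']
      (i : A' ⥤ A) (r : A ⥤ A'), i ⋙ r = 𝟭 A' → W (r ⋙ i) → W r
  star_mem : ∀ (A : Type u) [SmallCategory A], Limits.HasTerminal A → W (Functor.star A)
  mem_of_slices : ∀ {A B : Type u} [SmallCategory A] [SmallCategory B] (F : A ⥤ B),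
      (∀ b : B, W (sliceInduced F b)) → W F

/-- `W` is a fundamental localizer. -/
structure IsFundamentalLocalizer (W : FunctorClass.{u}) : Prop where
  id_mem : ∀ (A : Type u) [SmallCategory A], W (𝟭 A)
  comp_mem : ∀ {A B C : Type u} [SmallCategory A] [SmallCategory B] [SmallCategory C]
      (F : A ⥤ B) (G : B ⥤ C), W F → W G → W (F ⋙ G)
  of_comp_left : ∀ {A B C : Type u} [SmallCategory A] [SmallCategory B] [SmallCategory C]
      (F : A ⥤ B) (G : B ⥤ C), W F → W (F ⋙ G) → W G
  of_comp_right : ∀ {A B C : Type u} [SmallCategory A] [SmallCategory B] [SmallCategory C]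
      (F : A ⥤ B) (G : B ⥤ C), W G → W (F ⋙ G) → W F
  retract_mem : ∀ {A A' : Type u} [SmallCategory A] [SmallCategory A']
      (i : A' ⥤ A) (r : A ⥤ A'), i ⋙ r = 𝟭 A' → W (r ⋙ i) → W r
  star_mem : ∀ (A : Type u) [SmallCategory A], Limits.HasTerminal A → W (Functor.star A)
  mem_of_rel_slices : ∀ {A B C : Type u} [SmallCategory A] [SmallCategory B] [SmallCategory C]
      (F : A ⥤ B) (G : B ⥤ C), (∀ c : C, W (triangleSlice F G c)) → W F


section Squares

variable {A A' B B' : Type u} [SmallCategory A] [SmallCategory A']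
  [SmallCategory B] [SmallCategory B']

/-- The functor `A'/b' ⥤ A/w(b')` induced by a square `(u, u', v, w, α)`. -/
def squareSlice (u : A ⥤ B) (u' : A' ⥤ B') (v : A' ⥤ A) (w : B' ⥤ B)
    (α : v ⋙ u ⟶ u' ⋙ w) (b' : B') :
    CostructuredArrow u' b' ⥤ CostructuredArrow u (w.obj b') where
  obj x := CostructuredArrow.mk (Y := v.obj x.left) (α.app x.left ≫ w.map x.hom)
  map {x y} f := CostructuredArrow.homMk (v.map f.left) (by
    have h := α.naturality f.left
    dsimp at h ⊢
    rw [← Category.assoc, h, Category.assoc, ← Functor.map_comp, CostructuredArrow.w f])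

/-- The functor `a\A' ⥤ u(a)\B'` induced by a square `(u, u', v, w, α)`. -/
def squareCoslice (u : A ⥤ B) (u' : A' ⥤ B') (v : A' ⥤ A) (w : B' ⥤ B)
    (α : v ⋙ u ⟶ u' ⋙ w) (a : A) :
    StructuredArrow a v ⥤ StructuredArrow (u.obj a) w where
  obj x := StructuredArrow.mk (Y := u'.obj x.right) (u.map x.hom ≫ α.app x.right)
  map {x y} f := StructuredArrow.homMk (u'.map f.right) (by
    have h := α.naturality f.right
    dsimp at h ⊢
    rw [Category.assoc, ← h, ← Category.assoc, ← Functor.map_comp, StructuredArrow.w f])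

/-- The category `A'_{(a, b', g)}` attached to a square `(u, u', v, w, α)` and a triple
`(a, b', g : u(a) ⟶ w(b'))`. -/
structure SquareFiber (u : A ⥤ B) (u' : A' ⥤ B') (v : A' ⥤ A) (w : B' ⥤ B)
    (α : v ⋙ u ⟶ u' ⋙ w) (a : A) (b' : B') (g : u.obj a ⟶ w.obj b') : Type u where
  pt : A'
  f : a ⟶ v.obj pt
  g' : u'.obj pt ⟶ b'
  fac : u.map f ≫ α.app pt ≫ w.map g' = g

instance (u : A ⥤ B) (u' : A' ⥤ B') (v : A' ⥤ A) (w : B' ⥤ B)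
    (α : v ⋙ u ⟶ u' ⋙ w) (a : A) (b' : B') (g : u.obj a ⟶ w.obj b') :
    Category (SquareFiber u u' v w α a b' g) where
  Hom x y := { h : x.pt ⟶ y.pt // x.f ≫ v.map h = y.f ∧ u'.map h ≫ y.g' = x.g' }
  id x := ⟨𝟙 x.pt, by simp, by simp⟩
  comp {x y z} f g := ⟨f.1 ≫ g.1, by
      rw [Functor.map_comp, ← Category.assoc, f.2.1, g.2.1], by
      rw [Functor.map_comp, Category.assoc, g.2.2, f.2.2]⟩
  id_comp f := by apply Subtype.ext; simp
  comp_id f := by apply Subtype.ext; simp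
  assoc f g h := by apply Subtype.ext; simp

/-- A square `(u, u', v, w, α)` is `W`-exact. -/
def IsExactSquare (W : FunctorClass.{u}) (u : A ⥤ B) (u' : A' ⥤ B') (v : A' ⥤ A)
    (w : B' ⥤ B) (α : v ⋙ u ⟶ u' ⋙ w) : Prop :=
  ∀ b' : B', IsCoasphericalFunctor W (squareSlice u u' v w α b')

/-- The 2-cell of the opposite square. -/
def squareOpCell (u : A ⥤ B) (u' : A' ⥤ B') (v : A' ⥤ A) (w : B' ⥤ B)
    (α : v ⋙ u ⟶ u' ⋙ w) : u'.op ⋙ w.op ⟶ v.op ⋙ u.op :=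
  NatTrans.op α

end Squares

section Comps

/-- The 2-cell of the horizontal composite of two squares. -/
def hcomp2cell {A A' A'' B B' B'' : Type u}
    [SmallCategory A] [SmallCategory A'] [SmallCategory A'']
    [SmallCategory B] [SmallCategory B'] [SmallCategory B'']
    {u : A ⥤ B} {u' : A' ⥤ B'} {u'' : A'' ⥤ B''}
    {v : A' ⥤ A} {w : B' ⥤ B} {v' : A'' ⥤ A'} {w' : B'' ⥤ B'}
    (α : v ⋙ u ⟶ u' ⋙ w) (α' : v' ⋙ u' ⟶ u'' ⋙ w') :
    (v' ⋙ v) ⋙ u ⟶ u'' ⋙ (w' ⋙ w) :=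
  Functor.whiskerLeft v' α ≫ Functor.whiskerRight α' w

/-- The 2-cell of the vertical composite of two squares. -/
def vcomp2cell {A A' B B' C C' : Type u}
    [SmallCategory A] [SmallCategory A'] [SmallCategory B] [SmallCategory B']
    [SmallCategory C] [SmallCategory C']
    {u : A ⥤ B} {u' : A' ⥤ B'} {v : A' ⥤ A} {w : B' ⥤ B}
    {x : B ⥤ C} {x' : B' ⥤ C'} {y : C' ⥤ C}
    (α : v ⋙ u ⟶ u' ⋙ w) (β : w ⋙ x ⟶ x' ⋙ y) :
    v ⋙ (u ⋙ x) ⟶ (u' ⋙ x') ⋙ y :=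
  Functor.whiskerRight α x ≫ Functor.whiskerLeft u' β

end Comps

section Fibers

variable {A B : Type u} [SmallCategory A] [SmallCategory B]

/-- The fiber `A_b` of `F : A ⥤ B` at `b : B`. -/
structure CatFiber (F : A ⥤ B) (b : B) : Type u where
  obj : A
  eq : F.obj obj = b

instance (F : A ⥤ B) (b : B) : Category (CatFiber F b) where
  Hom x y := { f : x.obj ⟶ y.obj // F.map f = eqToHom (x.eq.trans y.eq.symm) }
  id x := ⟨𝟙 x.obj, by simp⟩
  comp {x y z} f g := ⟨f.1 ≫ g.1, by rw [Functor.map_comp, f.2, g.2, eqToHom_trans]⟩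
  id_comp f := by apply Subtype.ext; simp
  comp_id f := by apply Subtype.ext; simp
  assoc f g h := by apply Subtype.ext; simp

/-- The canonical functor `A_b ⥤ A/b`. -/
def fiberToSlice (F : A ⥤ B) (b : B) : CatFiber F b ⥤ CostructuredArrow F b where
  obj x := CostructuredArrow.mk (Y := x.obj) (eqToHom x.eq)
  map {x y} f := CostructuredArrow.homMk f.1 (by simp [f.2])

/-- The canonical functor `A_b ⥤ b\A`. -/
def fiberToCoslice (F : A ⥤ B) (b : B) : CatFiber F b ⥤ StructuredArrow b F where
  obj x := StructuredArrow.mk (Y := x.obj) (eqToHom x.eq.symm)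
  map {x y} f := StructuredArrow.homMk f.1 (by simp [f.2])

/-- The functor `F` is `W`-proper. -/
def IsProper (W : FunctorClass.{u}) (F : A ⥤ B) : Prop :=
  ∀ b : B, IsCoasphericalFunctor W (fiberToSlice F b)

/-- The functor `F` is `W`-smooth. -/
def IsSmooth (W : FunctorClass.{u}) (F : A ⥤ B) : Prop :=
  ∀ b : B, IsAsphericalFunctor W (fiberToCoslice F b)

/-- The functor `F` is a precofibration: each canonical functor `A_b ⥤ A/b` admits a left
adjoint. -/
def IsPrecofibration (F : A ⥤ B) : Prop :=
  ∀ b : B, (fiberToSlice F b).IsRightAdjoint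

end Fibers

/-- `F` is an isomorphism of categories. -/
def IsCatIso {A B : Type u} [SmallCategory A] [SmallCategory B] (F : A ⥤ B) : Prop :=
  ∃ G : B ⥤ A, F ⋙ G = 𝟭 A ∧ G ⋙ F = 𝟭 B

section Pullback

variable {A B B' : Type u} [SmallCategory A] [SmallCategory B] [SmallCategory B']

/-- The strict pullback `B' ×_B A` of `u : A ⥤ B` and `w : B' ⥤ B`. -/
structure CatPullback (u : A ⥤ B) (w : B' ⥤ B) : Type u where
  fst : B'
  snd : A
  eq : w.obj fst = u.obj snd

instance (u : A ⥤ B) (w : B' ⥤ B) : Category (CatPullback u w) where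
  Hom x y := { p : (x.fst ⟶ y.fst) × (x.snd ⟶ y.snd) //
    w.map p.1 ≫ eqToHom y.eq = eqToHom x.eq ≫ u.map p.2 }
  id x := ⟨(𝟙 x.fst, 𝟙 x.snd), by simp⟩
  comp {x y z} f g := ⟨(f.1.1 ≫ g.1.1, f.1.2 ≫ g.1.2), by
    rw [Functor.map_comp, Functor.map_comp, Category.assoc, g.2, ← Category.assoc, f.2,
      Category.assoc]⟩
  id_comp f := by apply Subtype.ext; simp
  comp_id f := by apply Subtype.ext; simp
  assoc f g h := by apply Subtype.ext; simp

/-- First projection of the strict pullback. -/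
def pbFst (u : A ⥤ B) (w : B' ⥤ B) : CatPullback u w ⥤ B' where
  obj x := x.fst
  map f := f.1.1

/-- Second projection of the strict pullback. -/
def pbSnd (u : A ⥤ B) (w : B' ⥤ B) : CatPullback u w ⥤ A where
  obj x := x.snd
  map f := f.1.2

theorem pb_comm (u : A ⥤ B) (w : B' ⥤ B) : pbSnd u w ⋙ u = pbFst u w ⋙ w := by
  have hobj : ∀ x : CatPullback u w, (pbSnd u w ⋙ u).obj x = (pbFst u w ⋙ w).obj x :=
    fun x => x.eq.symm
  refine CategoryTheory.Functor.ext hobj (fun x y f => ?_)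
  have h := f.2
  dsimp only [Functor.comp_map, pbFst, pbSnd]
  rw [h]
  simp
  first
    | (rw [← Category.assoc]; erw [eqToHom_trans, eqToHom_refl, Category.id_comp])
    | (dsimp only [Functor.comp_obj, pbFst, pbSnd]; rw [eqToHom_trans_assoc, eqToHom_refl, Category.id_comp])
    | (rw [← Category.assoc]; convert (Category.id_comp (u.map f.1.2)).symm; simp)

/-- The comparison functor from the top-left corner of a commutative square to the
strict pullback. -/
def toPullback {A' : Type u} [SmallCategory A'] (u : A ⥤ B) (u' : A' ⥤ B') (v : A' ⥤ A)
    (w : B' ⥤ B) (h : v ⋙ u = u' ⋙ w) : A' ⥤ CatPullback u w where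
  obj a' := ⟨u'.obj a', v.obj a', (Functor.congr_obj h a').symm⟩
  map {x y} f := ⟨(u'.map f, v.map f), by
    have := Functor.congr_hom h f
    dsimp at this
    rw [this]
    simp⟩
  map_id x := by
    apply Subtype.ext
    show (u'.map (𝟙 x), v.map (𝟙 x)) = (𝟙 _, 𝟙 _)
    simp
  map_comp f g := by
    apply Subtype.ext
    show (u'.map _, v.map _) = (u'.map _ ≫ u'.map _, v.map _ ≫ v.map _)
    simp

end Pullback

section BaseChange

variable {A A' B B' : Type u} [SmallCategory A] [SmallCategory A']
  [SmallCategory B] [SmallCategory B']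

/-- The base-change morphism `v ∘ r' ⟶ r ∘ w` associated with a square whose vertical
edges admit right adjoints. -/
def baseChangeR {u : A ⥤ B} {u' : A' ⥤ B'} {v : A' ⥤ A} {w : B' ⥤ B}
    {r : B ⥤ A} {r' : B' ⥤ A'} (adj : u ⊣ r) (adj' : u' ⊣ r')
    (α : v ⋙ u ⟶ u' ⋙ w) : r' ⋙ v ⟶ w ⋙ r :=
  Functor.whiskerLeft (r' ⋙ v) adj.unit ≫ Functor.whiskerLeft r' (Functor.whiskerRight α r) ≫
    Functor.whiskerRight adj'.counit (w ⋙ r)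

/-- The base-change morphism `w'' ∘ u ⟶ u' ∘ v''` associated with a square whose horizontal
edges admit left adjoints. -/
def baseChangeL {u : A ⥤ B} {u' : A' ⥤ B'} {v : A' ⥤ A} {w : B' ⥤ B}
    {v'' : A ⥤ A'} {w'' : B ⥤ B'} (adjv : v'' ⊣ v) (adjw : w'' ⊣ w)
    (α : v ⋙ u ⟶ u' ⋙ w) : u ⋙ w'' ⟶ v'' ⋙ u' :=
  Functor.whiskerRight adjv.unit (u ⋙ w'') ≫ Functor.whiskerLeft v'' (Functor.whiskerRight α w'') ≫
    Functor.whiskerLeft (v'' ⋙ u') adjw.counit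

end BaseChange

section LocColoc

variable {X Y C : Type u} [SmallCategory X] [SmallCategory Y] [SmallCategory C]

/-- `F : X ⥤ Y`, viewed over `C` via `P : Y ⥤ C` (and `F ⋙ P` on `X`), is a `W`-equivalence
locally on `C`. -/
def IsLocallyEquiv (W : FunctorClass.{u}) (F : X ⥤ Y) (P : Y ⥤ C) : Prop :=
  ∀ c : C, W (triangleSlice F P c)

/-- `F : X ⥤ Y`, viewed over `C` via `P : Y ⥤ C` (and `F ⋙ P` on `X`), is a `W`-equivalence
colocally on `C`. -/
def IsColocallyEquiv (W : FunctorClass.{u}) (F : X ⥤ Y) (P : Y ⥤ C) : Prop :=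
  ∀ c : C, W (triangleCoslice F P c)

end LocColoc

/-- A square `(u, u', v, w, α)` is weakly `W`-exact. -/
def IsWeakExactSquare (W : FunctorClass.{u}) {A A' B B' : Type u} [SmallCategory A]
    [SmallCategory A'] [SmallCategory B] [SmallCategory B'] (u : A ⥤ B) (u' : A' ⥤ B')
    (v : A' ⥤ A) (w : B' ⥤ B) (α : v ⋙ u ⟶ u' ⋙ w) : Prop :=
  ∀ b' : B', IsColocallyEquiv W (squareSlice u u' v w α b') (CostructuredArrow.proj u (w.obj b'))

/-- `w : B' ⥤ B` is a discrete fibration. -/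
def IsDiscreteFibration {B' B : Type u} [SmallCategory B'] [SmallCategory B]
    (w : B' ⥤ B) : Prop :=
  ∀ (b' : B') (b : B) (g : b ⟶ w.obj b'),
    ∃! p : Σ b₀ : B', b₀ ⟶ b', ∃ h : w.obj p.1 = b, w.map p.2 = eqToHom h ≫ g

/-- The coarse fundamental localizer: functors whose source and target are both empty or
both nonempty. -/
def coarseLocalizer : FunctorClass.{u} :=
  @fun A B _ _ _ => Nonempty A ↔ Nonempty B

/-- The map induced on sets of connected components. -/
def π₀map {A B : Type u} [SmallCategory A] [SmallCategory B] (F : A ⥤ B) :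
    ConnectedComponents A → ConnectedComponents B :=
  F.mapConnectedComponents

/-- The fundamental localizer `W₀` of `0`-equivalences: functors inducing a bijection on
connected components. -/
def W₀ : FunctorClass.{u} :=
  @fun _ _ _ _ F => Function.Bijective (π₀map F)

/-- A square in `Cat`: four small categories, four functors and a `2`-cell
`α : u ∘ v ⟶ w ∘ u'`. -/
structure CatSquare : Type (u + 1) where
  {A' : Type u}
  {A : Type u}
  {B' : Type u}
  {B : Type u}
  [instA' : SmallCategory A']
  [instA : SmallCategory A]
  [instB' : SmallCategory B']
  [instB : SmallCategory B]
  u : A ⥤ B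
  u' : A' ⥤ B'
  v : A' ⥤ A
  w : B' ⥤ B
  α : v ⋙ u ⟶ u' ⋙ w

attribute [instance] CatSquare.instA' CatSquare.instA CatSquare.instB' CatSquare.instB

/-- A bundled square is `W`-exact. -/
def CatSquare.IsExact (W : FunctorClass.{u}) (S : CatSquare.{u}) : Prop :=
  IsExactSquare W S.u S.u' S.v S.w S.α

/-- The opposite of a square. -/
def CatSquare.op (S : CatSquare.{u}) : CatSquare.{u} :=
  ⟨S.w.op, S.v.op, S.u'.op, S.u.op, squareOpCell S.u S.u' S.v S.w S.α⟩

/-- The comma square associated with `u : A ⥤ B` and `w : B' ⥤ B`. -/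
def commaSquare {A B B' : Type u} [SmallCategory A] [SmallCategory B] [SmallCategory B']
    (u : A ⥤ B) (w : B' ⥤ B) : CatSquare.{u} :=
  ⟨u, Comma.snd u w, Comma.fst u w, w, Comma.natTrans u w⟩

/-- The comma square `D^g_{u, b}` of `u : A ⥤ B` at an object `b : B`. -/
def commaObjSquare {A B : Type u} [SmallCategory A] [SmallCategory B] (u : A ⥤ B) (b : B) :
    CatSquare.{u} :=
  commaSquare u (Functor.fromPUnit.{u} b)

/-- The dual comma square `D^d_{v, a}` of `v : A' ⥤ A` at an object `a : A`. -/
def commaObjSquareD {A' A : Type u} [SmallCategory A'] [SmallCategory A] (v : A' ⥤ A)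
    (a : A) : CatSquare.{u} :=
  commaSquare (Functor.fromPUnit.{u} a) v

/-- The square with top edge `F : A ⥤ B`, the canonical functors `A ⥤ e`, `B ⥤ e` as
vertical edges, identity bottom edge and identity `2`-cell. -/
def starSquare {A B : Type u} [SmallCategory A] [SmallCategory B] (F : A ⥤ B) :
    CatSquare.{u} :=
  ⟨Functor.star B, Functor.star A, F, 𝟭 (PtCat.{u}), 𝟙 (F ⋙ Functor.star B)⟩

/-- The square with all four corners of the form `(A, e, e, e)`, canonical edges and
identity `2`-cell. -/
def ptSquare (A : Type u) [SmallCategory A] : CatSquare.{u} :=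
  ⟨𝟭 (PtCat.{u}), Functor.star A, Functor.star A, 𝟭 (PtCat.{u}), 𝟙 (Functor.star A)⟩

/-- `Q` is stable under horizontal composition of squares (condition CS1h). -/
def StableHComp (Q : CatSquare.{u} → Prop) : Prop :=
  ∀ {A A' A'' B B' B'' : Type u}
    [SmallCategory A] [SmallCategory A'] [SmallCategory A'']
    [SmallCategory B] [SmallCategory B'] [SmallCategory B'']
    (u : A ⥤ B) (u' : A' ⥤ B') (u'' : A'' ⥤ B'')
    (v : A' ⥤ A) (w : B' ⥤ B) (v' : A'' ⥤ A') (w' : B'' ⥤ B')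
    (α : v ⋙ u ⟶ u' ⋙ w) (α' : v' ⋙ u' ⟶ u'' ⋙ w'),
    Q ⟨u, u', v, w, α⟩ → Q ⟨u', u'', v', w', α'⟩ →
    Q ⟨u, u'', v' ⋙ v, w' ⋙ w, hcomp2cell α α'⟩

/-- `Q` is stable under vertical composition of squares (condition CS1v). -/
def StableVComp (Q : CatSquare.{u} → Prop) : Prop :=
  ∀ {A A' B B' C C' : Type u}
    [SmallCategory A] [SmallCategory A'] [SmallCategory B] [SmallCategory B']
    [SmallCategory C] [SmallCategory C']
    (u : A ⥤ B) (u' : A' ⥤ B') (v : A' ⥤ A) (w : B' ⥤ B)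
    (x : B ⥤ C) (x' : B' ⥤ C') (y : C' ⥤ C)
    (α : v ⋙ u ⟶ u' ⋙ w) (β : w ⋙ x ⟶ x' ⋙ y),
    Q ⟨u, u', v, w, α⟩ → Q ⟨x, x', w, y, β⟩ →
    Q ⟨u ⋙ x, u' ⋙ x', v, y, vcomp2cell α β⟩

/-- `Q` satisfies horizontal descent (condition CS2h). -/
def HorizontalDescent (Q : CatSquare.{u} → Prop) : Prop :=
  ∀ {A A' B B' : Type u}
    [SmallCategory A] [SmallCategory A'] [SmallCategory B] [SmallCategory B']
    (u : A ⥤ B) (u' : A' ⥤ B') (v : A' ⥤ A) (w : B' ⥤ B) (α : v ⋙ u ⟶ u' ⋙ w)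
    (J : Type u) (Aj Bj : J → Type u)
    [∀ j, SmallCategory (Aj j)] [∀ j, SmallCategory (Bj j)]
    (uj : ∀ j, Aj j ⥤ Bj j) (vj : ∀ j, Aj j ⥤ A') (wj : ∀ j, Bj j ⥤ B')
    (αj : ∀ j, vj j ⋙ u' ⟶ uj j ⋙ wj j),
    (∀ b' : B', ∃ j, ∃ b : Bj j, (wj j).obj b = b') →
    (∀ j, Q ⟨u', uj j, vj j, wj j, αj j⟩) →
    (∀ j, Q ⟨u, uj j, vj j ⋙ v, wj j ⋙ w, hcomp2cell α (αj j)⟩) →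
    Q ⟨u, u', v, w, α⟩

/-- `Q` satisfies local descent (condition CS3h). -/
def LocalDescent (Q : CatSquare.{u} → Prop) : Prop :=
  ∀ {A A' B B' : Type u}
    [SmallCategory A] [SmallCategory A'] [SmallCategory B] [SmallCategory B']
    (u : A ⥤ B) (u' : A' ⥤ B') (v : A' ⥤ A) (w : B' ⥤ B) (α : v ⋙ u ⟶ u' ⋙ w),
    (∀ b' : B', Q ⟨u, Comma.snd u' (Functor.fromPUnit.{u} b'),
        Comma.fst u' (Functor.fromPUnit.{u} b') ⋙ v, Functor.fromPUnit.{u} b' ⋙ w,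
        hcomp2cell α (Comma.natTrans u' (Functor.fromPUnit.{u} b'))⟩) →
    Q ⟨u, u', v, w, α⟩

/-- `Q` satisfies colocal descent (condition CS3v). -/
def ColocalDescent (Q : CatSquare.{u} → Prop) : Prop :=
  ∀ {A A' B B' : Type u}
    [SmallCategory A] [SmallCategory A'] [SmallCategory B] [SmallCategory B']
    (u : A ⥤ B) (u' : A' ⥤ B') (v : A' ⥤ A) (w : B' ⥤ B) (α : v ⋙ u ⟶ u' ⋙ w),
    (∀ a : A, Q ⟨Functor.fromPUnit.{u} a ⋙ u,
        Comma.snd (Functor.fromPUnit.{u} a) v ⋙ u',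
        Comma.fst (Functor.fromPUnit.{u} a) v, w,
        vcomp2cell (Comma.natTrans (Functor.fromPUnit.{u} a) v) α⟩) →
    Q ⟨u, u', v, w, α⟩

/-- `Q` is stable under passing to opposite squares (condition CS4). -/
def OpStable (Q : CatSquare.{u} → Prop) : Prop :=
  ∀ S : CatSquare.{u}, Q S → Q S.op

/-- Isomorphism of squares. -/
def CatSquare.Isomorphic (S T : CatSquare.{u}) : Prop :=
  ∃ (eA' : S.A' ⥤ T.A') (eA : S.A ⥤ T.A) (eB' : S.B' ⥤ T.B') (eB : S.B ⥤ T.B)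
    (_ : IsCatIso eA') (_ : IsCatIso eA) (_ : IsCatIso eB') (_ : IsCatIso eB)
    (hv : S.v ⋙ eA = eA' ⋙ T.v) (hu : S.u ⋙ eB = eA ⋙ T.u)
    (hu' : S.u' ⋙ eB' = eA' ⋙ T.u') (hw : S.w ⋙ eB = eB' ⋙ T.w),
    Functor.whiskerRight S.α eB =
      eqToHom (by rw [Functor.assoc, hu, ← Functor.assoc, hv, Functor.assoc]) ≫
        Functor.whiskerLeft eA' T.α ≫
        eqToHom (by rw [← Functor.assoc, ← hu', Functor.assoc, ← hw, ← Functor.assoc])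

/-- A bundled square is a right Beck–Chevalley square. -/
def CatSquare.IsRightBC (S : CatSquare.{u}) : Prop :=
  ∃ (v'' : S.A ⥤ S.A') (w'' : S.B ⥤ S.B') (adjv : v'' ⊣ S.v) (adjw : w'' ⊣ S.w),
    IsIso (baseChangeL adjv adjw S.α)

/-- The functor `A/b ⥤ B/b` induced by `u : A ⥤ B`, in terms of comma categories. -/
def commaSliceInduced {A B : Type u} [SmallCategory A] [SmallCategory B] (u : A ⥤ B)
    (b : B) : Comma u (Functor.fromPUnit.{u} b) ⥤ Comma (𝟭 B) (Functor.fromPUnit.{u} b) where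
  obj x := { left := u.obj x.left, right := x.right, hom := x.hom }
  map {x y} f := { left := u.map f.left, right := f.right, w := by simp [f.w] }

/-- The cartesian square expressing `A/b` as the pullback of `u : A ⥤ B` along the
forgetful functor `B/b ⥤ B`. -/
def sliceCartSquare {A B : Type u} [SmallCategory A] [SmallCategory B] (u : A ⥤ B)
    (b : B) : CatSquare.{u} :=
  ⟨u, commaSliceInduced u b, Comma.fst u (Functor.fromPUnit.{u} b),
    Comma.fst (𝟭 B) (Functor.fromPUnit.{u} b),
    𝟙 (Comma.fst u (Functor.fromPUnit.{u} b) ⋙ u)⟩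


section HelperA
open Limits
variable {W : FunctorClass.{u}}

theorem asph_src (hW : IsWeakFundamentalLocalizer W) {A B : Type u} [SmallCategory A] [SmallCategory B] (F : A ⥤ B)
    (hF : W F) (hB : IsAsphericalCat W B) : IsAsphericalCat W A :=
  hW.comp_mem F (Functor.star B) hF hB

theorem asph_tgt (hW : IsWeakFundamentalLocalizer W) {A B : Type u} [SmallCategory A] [SmallCategory B] (F : A ⥤ B)
    (hF : W F) (hA : IsAsphericalCat W A) : IsAsphericalCat W B :=
  hW.of_comp_left F (Functor.star B) hF hA

theorem w_of_asph (hW : IsWeakFundamentalLocalizer W) {A B : Type u} [SmallCategory A] [SmallCategory B] (F : A ⥤ B)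
    (hA : IsAsphericalCat W A) (hB : IsAsphericalCat W B) : W F :=
  hW.of_comp_right F (Functor.star B) hB hA

theorem asph_of_terminal (hW : IsWeakFundamentalLocalizer W) {A : Type u} [SmallCategory A] (h : HasTerminal A) :
    IsAsphericalCat W A := hW.star_mem A h

theorem w_of_slices_asph (hW : IsWeakFundamentalLocalizer W) {A B : Type u} [SmallCategory A] [SmallCategory B] (F : A ⥤ B)
    (h : ∀ b, IsAsphericalCat W (CostructuredArrow F b)) : W F := by
  refine hW.mem_of_slices F (fun b => ?_)
  exact w_of_asph hW _ (h b) (hW.star_mem _ Over.mkIdTerminal.hasTerminal)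

noncomputable def costructured_terminal_of_adj {A B : Type u} [SmallCategory A] [SmallCategory B]
    {F : A ⥤ B} {G : B ⥤ A} (adj : F ⊣ G) (b : B) :
    Limits.IsTerminal (CostructuredArrow.mk (adj.counit.app b) : CostructuredArrow F b) := by
  refine IsTerminal.ofUniqueHom
    (fun X => (CostructuredArrow.homMk ((adj.homEquiv _ _) X.hom)
      (by simp [Adjunction.homEquiv_unit]) :
        X ⟶ CostructuredArrow.mk (adj.counit.app b))) ?_
  intro X m
  apply CostructuredArrow.hom_ext
  have h := CostructuredArrow.w m
  simp only [CostructuredArrow.mk_hom_eq_self] at h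
  show m.left = (adj.homEquiv _ _) X.hom
  rw [← h]
  simp [Adjunction.homEquiv_unit]

theorem w_of_adj (hW : IsWeakFundamentalLocalizer W) {A B : Type u} [SmallCategory A] [SmallCategory B]
    {F : A ⥤ B} {G : B ⥤ A} (adj : F ⊣ G) : W F :=
  w_of_slices_asph hW F (fun b =>
    hW.star_mem _ (costructured_terminal_of_adj adj b).hasTerminal)

theorem w_of_equiv (hW : IsWeakFundamentalLocalizer W) {A B : Type u} [SmallCategory A] [SmallCategory B]
    (F : A ⥤ B) [F.IsEquivalence] : W F :=
  w_of_adj hW F.asEquivalence.toAdjunction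

-- PtCat facts
theorem ptObjEq (x y : PtCat.{u}) : x = y := by
  rcases x with ⟨⟨⟩⟩; rcases y with ⟨⟨⟩⟩; rfl

theorem ptHomEq {x y : PtCat.{u}} (f g : x ⟶ y) : f = g := by
  rcases f with ⟨⟨f⟩⟩; rcases g with ⟨⟨g⟩⟩; rfl

def ptHom (x y : PtCat.{u}) : x ⟶ y := eqToHom (ptObjEq x y)

def ptInitial : Limits.IsInitial (⟨⟨⟩⟩ : PtCat.{u}) :=
  IsInitial.ofUniqueHom (fun y => ptHom _ y) (fun _ _ => ptHomEq _ _)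

theorem asph_of_initial (hW : IsWeakFundamentalLocalizer W) {C : Type u} [SmallCategory C]
    {c₀ : C} (h : Limits.IsInitial c₀) : IsAsphericalCat W C := by
  have hpick : W (Functor.fromPUnit.{u} c₀) := by
    refine w_of_slices_asph hW _ (fun c => ?_)
    have hterm : Limits.IsTerminal
        (CostructuredArrow.mk (Y := ⟨⟨⟩⟩) (h.to c) : CostructuredArrow (Functor.fromPUnit.{u} c₀) c) := by
      refine IsTerminal.ofUniqueHom
        (fun X => (CostructuredArrow.homMk (ptHom _ _) (h.hom_ext _ _) :
          X ⟶ CostructuredArrow.mk (Y := ⟨⟨⟩⟩) (h.to c))) ?_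
      intro X m
      apply CostructuredArrow.hom_ext
      exact ptHomEq _ _
    exact hW.star_mem _ hterm.hasTerminal
  exact hW.of_comp_left (Functor.fromPUnit.{u} c₀) (Functor.star C) hpick (hW.id_mem PtCat.{u})

end HelperA

section HelperB
open Limits
variable {W : FunctorClass.{u}}

/-- Twisted arrow category. -/
structure TwObj (C : Type u) [SmallCategory C] : Type u where
  src : C
  tgt : C
  hom : src ⟶ tgt

instance twCategory (C : Type u) [SmallCategory C] : SmallCategory (TwObj C) where
  Hom f g := { p : (g.src ⟶ f.src) × (f.tgt ⟶ g.tgt) // g.hom = p.1 ≫ f.hom ≫ p.2 }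
  id f := ⟨(𝟙 _, 𝟙 _), by simp⟩
  comp {f g h} p q := ⟨(q.1.1 ≫ p.1.1, p.1.2 ≫ q.1.2), by
    obtain ⟨⟨qa, qb⟩, hq⟩ := q
    obtain ⟨⟨pa, pb⟩, hp⟩ := p
    dsimp at hq hp ⊢
    rw [hq, hp]; simp⟩
  id_comp f := by
    apply Subtype.ext; ext
    · exact Category.comp_id _
    · exact Category.id_comp _
  comp_id f := by
    apply Subtype.ext; ext
    · exact Category.id_comp _
    · exact Category.comp_id _
  assoc f g h := by
    apply Subtype.ext; ext
    · exact (Category.assoc _ _ _).symm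
    · exact Category.assoc _ _ _

def twTgt (C : Type u) [SmallCategory C] : TwObj C ⥤ C where
  obj f := f.tgt
  map p := p.1.2
  map_id f := rfl
  map_comp p q := rfl

def twSrc (C : Type u) [SmallCategory C] : TwObj C ⥤ Cᵒᵖ where
  obj f := Opposite.op f.src
  map p := p.1.1.op
  map_id f := rfl
  map_comp p q := rfl

def twMap {C D : Type u} [SmallCategory C] [SmallCategory D] (F : C ⥤ D) :
    TwObj C ⥤ TwObj D where
  obj f := ⟨F.obj f.src, F.obj f.tgt, F.map f.hom⟩
  map {f g} p := ⟨(F.map p.1.1, F.map p.1.2), by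
    obtain ⟨⟨pa, pb⟩, hp⟩ := p
    dsimp at hp ⊢
    rw [hp]; simp⟩
  map_id f := by
    apply Subtype.ext; ext
    · exact F.map_id _
    · exact F.map_id _
  map_comp p q := by
    apply Subtype.ext; ext
    · exact F.map_comp _ _
    · exact F.map_comp _ _

/-- Comparison from the slice of `twTgt` to `(Over c)ᵒᵖ`. -/
def twTgtSliceCmp (C : Type u) [SmallCategory C] (c : C) :
    CostructuredArrow (twTgt C) c ⥤ (Over c)ᵒᵖ where
  obj x := Opposite.op (Over.mk (x.left.hom ≫ x.hom))
  map {x y} φ := (Over.homMk φ.left.1.1 (by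
    have h2 := CostructuredArrow.w φ
    obtain ⟨⟨⟨a, b⟩, hab⟩, r, wφ⟩ := φ
    dsimp [twTgt] at h2 hab ⊢
    rw [hab]
    simp only [Category.assoc, h2]) : Over.mk (y.left.hom ≫ y.hom) ⟶ Over.mk (x.left.hom ≫ x.hom)).op
  map_id x := by
    apply Quiver.Hom.unop_inj
    apply CommaMorphism.ext <;> rfl
  map_comp φ ψ := by
    apply Quiver.Hom.unop_inj
    apply CommaMorphism.ext <;> rfl

theorem punitHomEq {x y : Discrete PUnit.{w + 1}} (f g : x ⟶ y) : f = g := by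
  rcases f with ⟨⟨hf⟩⟩; rcases g with ⟨⟨hg⟩⟩; rfl

theorem punitHomEq' {x y : PtCat.{u}} (f g : x ⟶ y) : f = g := punitHomEq f g

theorem w_twTgt (hW : IsWeakFundamentalLocalizer W) (C : Type u) [SmallCategory C] :
    W (twTgt C) := by
  refine w_of_slices_asph hW _ (fun c => ?_)
  have hρ : W (twTgtSliceCmp C c) := by
    refine w_of_slices_asph hW _ (fun t => ?_)
    rcases t with ⟨t'⟩
    let x₀ : CostructuredArrow (twTgt C) c :=
      CostructuredArrow.mk (Y := TwObj.mk t'.left c t'.hom) (𝟙 c)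
    let m₀ : (twTgtSliceCmp C c).obj x₀ ⟶ Opposite.op t' :=
      (Over.homMk (𝟙 t'.left) (by simp) : t' ⟶ Over.mk (t'.hom ≫ 𝟙 c)).op
    have hterm : Limits.IsTerminal
        (CostructuredArrow.mk (Y := x₀) m₀ :
          CostructuredArrow (twTgtSliceCmp C c) (Opposite.op t')) := by
      refine IsTerminal.ofUniqueHom (fun X => ?_) ?_
      · have hx := Over.w X.hom.unop
        dsimp [twTgtSliceCmp] at hx
        refine CostructuredArrow.homMk
          (CostructuredArrow.homMk (⟨(X.hom.unop.left, X.left.hom), ?_⟩ :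
            X.left.left ⟶ x₀.left) ?_) ?_
        · show t'.hom = X.hom.unop.left ≫ X.left.left.hom ≫ X.left.hom
          exact hx.symm
        · show X.left.hom ≫ 𝟙 c = X.left.hom
          simp
        · apply Quiver.Hom.unop_inj
          refine CommaMorphism.ext ?_ (punitHomEq _ _)
          show 𝟙 t'.left ≫ X.hom.unop.left = X.hom.unop.left
          simp
      · intro X m
        apply CostructuredArrow.hom_ext
        apply CostructuredArrow.hom_ext
        have h2 := congrArg (fun (z : _ ⟶ Opposite.op t') => z.unop.left) (CostructuredArrow.w m)
        have h1 := CostructuredArrow.w m.left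
        dsimp [twTgtSliceCmp, twTgt] at h1 h2
        apply Subtype.ext
        have h1' : (m.left.left).1.2 = X.left.hom := by
          rw [← h1]
          exact (Category.comp_id _).symm
        have h2' : (m.left.left).1.1 = X.hom.unop.left := by exact (Category.id_comp _).symm.trans h2
        ext
        · exact h2'
        · exact h1'
    exact hW.star_mem _ hterm.hasTerminal
  exact asph_src hW _ hρ (asph_of_initial hW (initialOpOfTerminal Over.mkIdTerminal))


/-- Comparison from the slice of `twSrc` to `Under`. -/
def twSrcSliceCmp (C : Type u) [SmallCategory C] (e : Cᵒᵖ) :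
    CostructuredArrow (twSrc C) e ⥤ StructuredArrow e.unop (𝟭 C) where
  obj x := StructuredArrow.mk (Y := x.left.tgt) (x.hom.unop ≫ x.left.hom)
  map {x y} φ := StructuredArrow.homMk φ.left.1.2 (by
    have h2 := congrArg Quiver.Hom.unop (CostructuredArrow.w φ)
    obtain ⟨⟨⟨a, b⟩, hab⟩, r, wφ⟩ := φ
    dsimp [twSrc] at h2 hab ⊢
    rw [hab, ← h2]
    simp)
  map_id x := by apply StructuredArrow.hom_ext; rfl
  map_comp φ ψ := by apply StructuredArrow.hom_ext; rfl

theorem w_twSrc (hW : IsWeakFundamentalLocalizer W) (C : Type u) [SmallCategory C] :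
    W (twSrc C) := by
  refine w_of_slices_asph hW _ (fun e => ?_)
  rcases e with ⟨e'⟩
  have hρ : W (twSrcSliceCmp C (Opposite.op e')) := by
    refine w_of_slices_asph hW _ (fun t => ?_)
    let x₀ : CostructuredArrow (twSrc C) (Opposite.op e') :=
      CostructuredArrow.mk (Y := TwObj.mk e' t.right t.hom) (𝟙 (Opposite.op e'))
    let m₀ : (twSrcSliceCmp C (Opposite.op e')).obj x₀ ⟶ t :=
      StructuredArrow.homMk (𝟙 t.right) (by
        show ((𝟙 (Opposite.op e')).unop ≫ t.hom) ≫ 𝟙 t.right = t.hom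
        simp)
    have hterm : Limits.IsTerminal
        (CostructuredArrow.mk (Y := x₀) m₀ :
          CostructuredArrow (twSrcSliceCmp C (Opposite.op e')) t) := by
      refine IsTerminal.ofUniqueHom (fun X => ?_) ?_
      · have hx := StructuredArrow.w X.hom
        dsimp [twSrcSliceCmp] at hx
        refine CostructuredArrow.homMk
          (CostructuredArrow.homMk (⟨(X.left.hom.unop, X.hom.right), ?_⟩ :
            X.left.left ⟶ x₀.left) ?_) ?_
        · show t.hom = X.left.hom.unop ≫ X.left.left.hom ≫ X.hom.right
          exact hx.symm.trans (Category.assoc _ _ _)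
        · show (X.left.hom.unop).op ≫ 𝟙 (Opposite.op e') = X.left.hom
          simp
        · apply StructuredArrow.hom_ext
          show _ ≫ 𝟙 t.right = X.hom.right
          simp [twSrcSliceCmp]
      · intro X m
        apply CostructuredArrow.hom_ext
        apply CostructuredArrow.hom_ext
        have h2 := congrArg (fun (z : _ ⟶ t) => z.right) (CostructuredArrow.w m)
        have h1 := congrArg (fun (z : _ ⟶ Opposite.op e') => z.unop) (CostructuredArrow.w m.left)
        dsimp [twSrcSliceCmp, twSrc] at h1 h2
        apply Subtype.ext
        ext
        · show (m.left.left : _).1.1 = X.left.hom.unop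
          exact (Category.id_comp _).symm.trans h1
        · show (m.left.left : _).1.2 = X.hom.right
          exact (Category.comp_id _).symm.trans h2
    exact hW.star_mem _ hterm.hasTerminal
  have hUnder : IsAsphericalCat W (StructuredArrow e' (𝟭 C)) :=
    asph_of_initial hW (StructuredArrow.mkIdInitial (T := 𝟭 C) (Y := e'))
  exact asph_src hW _ hρ hUnder

theorem w_of_op (hW : IsWeakFundamentalLocalizer W) {A B : Type u} [SmallCategory A]
    [SmallCategory B] (F : A ⥤ B) (h : W F.op) : W F := by
  have h1 : W (twMap F ⋙ twSrc B) := hW.comp_mem (twSrc A) F.op (w_twSrc hW A) h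
  have h2 : W (twMap F) := hW.of_comp_right (twMap F) (twSrc B) (w_twSrc hW B) h1
  have h3 : W (twMap F ⋙ twTgt B) := hW.comp_mem _ _ h2 (w_twTgt hW B)
  exact hW.of_comp_left (twTgt A) F (w_twTgt hW A) h3

theorem asph_ptop (hW : IsWeakFundamentalLocalizer W) :
    IsAsphericalCat W (PtCat.{u}ᵒᵖ) :=
  hW.star_mem _ (Limits.IsTerminal.hasTerminal
    (Limits.terminalOpOfInitial ptInitial))

theorem asph_unop (hW : IsWeakFundamentalLocalizer W) {C : Type u} [SmallCategory C]
    (h : IsAsphericalCat W Cᵒᵖ) : IsAsphericalCat W C := by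
  apply w_of_op hW (Functor.star C)
  exact w_of_asph hW _ h (asph_ptop hW)

theorem asph_op (hW : IsWeakFundamentalLocalizer W) {C : Type u} [SmallCategory C]
    (h : IsAsphericalCat W C) : IsAsphericalCat W Cᵒᵖ := by
  apply w_of_op hW (Functor.star Cᵒᵖ)
  refine w_of_asph hW _ ?_ (asph_ptop hW)
  exact asph_src hW _ (w_of_adj hW (opOpEquivalence C).toAdjunction) h

theorem coasph_mem (hW : IsWeakFundamentalLocalizer W) {A B : Type u} [SmallCategory A]
    [SmallCategory B] (F : A ⥤ B) (h : IsCoasphericalFunctor W F) : W F := by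
  apply w_of_op hW F
  refine w_of_slices_asph hW F.op (fun bop => ?_)
  rcases bop with ⟨b⟩
  have hw : W (structuredArrowOpEquivalence F b).functor :=
    w_of_adj hW (structuredArrowOpEquivalence F b).toAdjunction
  exact asph_tgt hW _ hw (asph_op hW (h b))


theorem w_of_ffes (hW : IsWeakFundamentalLocalizer W) {A B : Type u} [SmallCategory A]
    [SmallCategory B] (F : A ⥤ B) [F.Full] [F.Faithful] [F.EssSurj] : W F := by
  haveI : F.IsEquivalence := {}
  exact w_of_equiv hW F

section CoasphComp
variable {A₁ A₂ A₃ : Type u} [SmallCategory A₁] [SmallCategory A₂] [SmallCategory A₃]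
  (G₁ : A₁ ⥤ A₂) (G₂ : A₂ ⥤ A₃) (z : A₃) (y : StructuredArrow z G₂)

def coasphCmp : StructuredArrow y (triangleCoslice G₁ G₂ z) ⥤ StructuredArrow y.right G₁ where
  obj q := StructuredArrow.mk (Y := q.right.right) q.hom.right
  map {q q₁} g := StructuredArrow.homMk g.right.right (by
    have hg := congrArg CommaMorphism.right (StructuredArrow.w g)
    dsimp [triangleCoslice] at hg ⊢
    simpa using hg)
  map_id q := by apply StructuredArrow.hom_ext; rfl
  map_comp g g' := by apply StructuredArrow.hom_ext; rfl

instance coasphCmp_faithful : (coasphCmp G₁ G₂ z y).Faithful where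
  map_injective {q q₁} g g' h := by
    have h' := congrArg CommaMorphism.right h
    apply StructuredArrow.hom_ext
    apply StructuredArrow.hom_ext
    simpa [coasphCmp] using h'

instance coasphCmp_full : (coasphCmp G₁ G₂ z y).Full where
  map_surjective {q q₁} k := by
    have hk := StructuredArrow.w k
    have hq := StructuredArrow.w q.hom
    have hq₁ := StructuredArrow.w q₁.hom
    dsimp [coasphCmp, triangleCoslice] at hk hq hq₁
    refine ⟨StructuredArrow.homMk (StructuredArrow.homMk k.right ?_) ?_, ?_⟩
    · show q.right.hom ≫ G₂.map (G₁.map k.right) = q₁.right.hom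
      rw [← hq, ← hq₁, Category.assoc, ← G₂.map_comp]
      exact congrArg (fun t => y.hom ≫ G₂.map t) hk
    · apply StructuredArrow.hom_ext
      show q.hom.right ≫ G₁.map k.right = q₁.hom.right
      exact hk
    · apply StructuredArrow.hom_ext
      rfl
  
instance coasphCmp_essSurj : (coasphCmp G₁ G₂ z y).EssSurj where
  mem_essImage k := by
    let inner : StructuredArrow z (G₁ ⋙ G₂) :=
      StructuredArrow.mk (Y := k.right) (y.hom ≫ G₂.map k.hom)
    have hw : y.hom ≫ G₂.map k.hom = ((triangleCoslice G₁ G₂ z).obj inner).hom := rfl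
    exact ⟨StructuredArrow.mk (Y := inner) (StructuredArrow.homMk k.hom hw), ⟨Iso.refl _⟩⟩

end CoasphComp

theorem coasph_comp (hW : IsWeakFundamentalLocalizer W)
    {A₁ A₂ A₃ : Type u} [SmallCategory A₁] [SmallCategory A₂] [SmallCategory A₃]
    (G₁ : A₁ ⥤ A₂) (G₂ : A₂ ⥤ A₃)
    (h₁ : IsCoasphericalFunctor W G₁) (h₂ : IsCoasphericalFunctor W G₂) :
    IsCoasphericalFunctor W (G₁ ⋙ G₂) := by
  intro z
  have hp : W (triangleCoslice G₁ G₂ z) := by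
    refine coasph_mem hW _ (fun y => ?_)
    exact asph_src hW (coasphCmp G₁ G₂ z y) (w_of_ffes hW _) (h₁ y.right)
  exact asph_src hW _ hp (h₂ z)


section CommaSq
variable {A B B' : Type u} [SmallCategory A] [SmallCategory B] [SmallCategory B']

variable (w : B' ⥤ B) {β : B} (b' : B') (g : β ⟶ w.obj b')

structure FactObj : Type u where
  mid : B'
  h : β ⟶ w.obj mid
  g' : mid ⟶ b'
  fac : h ≫ w.map g' = g

instance : SmallCategory (FactObj w b' g) where
  Hom t t' := { k : t.mid ⟶ t'.mid // t.h ≫ w.map k = t'.h ∧ k ≫ t'.g' = t.g' }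
  id t := ⟨𝟙 t.mid, by simp, by simp⟩
  comp {t t' t''} k l := ⟨k.1 ≫ l.1, by
      obtain ⟨k, hk1, hk2⟩ := k
      obtain ⟨l, hl1, hl2⟩ := l
      constructor
      · rw [Functor.map_comp, ← Category.assoc, hk1, hl1]
      · rw [Category.assoc, hl2, hk2]⟩
  id_comp k := by apply Subtype.ext; exact Category.id_comp _
  comp_id k := by apply Subtype.ext; exact Category.comp_id _
  assoc k l m := by apply Subtype.ext; exact Category.assoc _ _ _

def factTerminal : Limits.IsTerminal (FactObj.mk b' g (𝟙 b') (by simp) : FactObj w b' g) := by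
  refine Limits.IsTerminal.ofUniqueHom
    (fun t => ⟨t.g', ⟨by simpa using t.fac, Category.comp_id _⟩⟩) ?_
  intro t m
  apply Subtype.ext
  have := m.2.2
  simpa using this

variable (u : A ⥤ B)

abbrev commaSlice (b' : B') :=
  squareSlice u (Comma.snd u w) (Comma.fst u w) w (Comma.natTrans u w) b'

variable (x : CostructuredArrow u (w.obj b'))

/-- inclusion of the factorization category into the comma of the comma-square slice. -/
def factToSlice : FactObj w b' x.hom ⥤ StructuredArrow x (commaSlice w u b') where
  obj t := StructuredArrow.mk
    (Y := CostructuredArrow.mk (Y := (⟨x.left, t.mid, t.h⟩ : Comma u w)) t.g')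
    (CostructuredArrow.homMk (𝟙 x.left) (by
      show u.map (𝟙 x.left) ≫ t.h ≫ w.map t.g' = x.hom
      simpa using t.fac))
  map {t t'} k := StructuredArrow.homMk
    (CostructuredArrow.homMk
      (⟨𝟙 x.left, k.1, by
        dsimp
        simpa using k.2.1.symm⟩ :
        (⟨x.left, t.mid, t.h⟩ : Comma u w) ⟶ ⟨x.left, t'.mid, t'.h⟩)
      (by
        dsimp
        exact k.2.2))
    (by
      apply CostructuredArrow.hom_ext
      dsimp [squareSlice]
      exact Category.id_comp _)
  map_id t := by
    apply StructuredArrow.hom_ext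
    apply CostructuredArrow.hom_ext
    rfl
  map_comp k l := by
    apply StructuredArrow.hom_ext
    apply CostructuredArrow.hom_ext
    apply CommaMorphism.ext
    · exact (Category.comp_id _).symm
    · rfl

theorem commaSquare_exact (hW : IsWeakFundamentalLocalizer W) :
    IsExactSquare W u (Comma.snd u w) (Comma.fst u w) w (Comma.natTrans u w) := by
  intro b' x
  have hι : W (factToSlice w b' u x) := by
    refine w_of_slices_asph hW _ (fun s => ?_)
    have hφ := CostructuredArrow.w s.hom
    dsimp [commaSlice, squareSlice] at hφ
    let t₀ : FactObj w b' x.hom :=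
      ⟨s.right.left.right, u.map s.hom.left ≫ s.right.left.hom, s.right.hom, by
        exact (Category.assoc _ _ _).trans hφ⟩
    let m₀ : (factToSlice w b' u x).obj t₀ ⟶ s :=
      StructuredArrow.homMk
        (CostructuredArrow.homMk
          (⟨s.hom.left, 𝟙 s.right.left.right, by
            show u.map s.hom.left ≫ s.right.left.hom =
              (u.map s.hom.left ≫ s.right.left.hom) ≫ w.map (𝟙 _)
            simp⟩ :
            (⟨x.left, t₀.mid, t₀.h⟩ : Comma u w) ⟶ s.right.left)
          (by
            show 𝟙 s.right.left.right ≫ s.right.hom = s.right.hom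
            simp))
        (by
          apply CostructuredArrow.hom_ext
          dsimp [factToSlice, commaSlice, squareSlice]
          simp
          exact Category.id_comp _)
    have hterm : Limits.IsTerminal
        (CostructuredArrow.mk (Y := t₀) m₀ :
          CostructuredArrow (factToSlice w b' u x) s) := by
      refine Limits.IsTerminal.ofUniqueHom (fun X => ?_) ?_
      · -- component extraction
        have ha := congrArg (fun (ζ : x ⟶ (commaSlice w u b').obj s.right) => ζ.left)
          (StructuredArrow.w X.hom)
        have hmid := CostructuredArrow.w X.hom.right
        have hcm := X.hom.right.left.w
        dsimp [factToSlice, commaSlice, squareSlice] at ha hmid hcm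
        refine CostructuredArrow.homMk
          (⟨X.hom.right.left.right, ?_, ?_⟩ : X.left ⟶ t₀) ?_
        · show X.left.h ≫ w.map X.hom.right.left.right = u.map s.hom.left ≫ s.right.left.hom
          rw [← hcm]
          have hXa : X.hom.right.left.left = s.hom.left := (Category.id_comp _).symm.trans ha
          rw [hXa]
          rfl
        · show X.hom.right.left.right ≫ s.right.hom = X.left.g'
          exact hmid
        · -- (factToSlice).map k ≫ m₀ = X.hom
          apply StructuredArrow.hom_ext
          apply CostructuredArrow.hom_ext
          apply CommaMorphism.ext
          · show 𝟙 x.left ≫ s.hom.left = X.hom.right.left.left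
            exact (Category.id_comp _).trans ((Category.id_comp _).symm.trans ha).symm
          · show X.hom.right.left.right ≫ 𝟙 _ = X.hom.right.left.right
            simp
      · intro X m
        apply CostructuredArrow.hom_ext
        apply Subtype.ext
        have := congrArg
          (fun (ζ : (factToSlice w b' u x).obj X.left ⟶ s) => ζ.right.left.right)
          (CostructuredArrow.w m)
        dsimp [factToSlice, commaSlice, squareSlice] at this
        exact (Category.comp_id _).symm.trans this
    exact hW.star_mem _ hterm.hasTerminal
  exact asph_tgt hW _ hι (hW.star_mem _ (factTerminal w b' x.hom).hasTerminal)

end CommaSq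

section StarSq
variable {A B : Type u} [SmallCategory A] [SmallCategory B] (F : A ⥤ B)
  (b' : PtCat.{u}) (x : CostructuredArrow (Functor.star B) b')

abbrev starSlice := squareSlice (Functor.star B) (Functor.star A) F (𝟭 PtCat.{u})
  (𝟙 (F ⋙ Functor.star B)) b'

def starCmp : StructuredArrow x (starSlice F b') ⥤ StructuredArrow x.left F where
  obj q := StructuredArrow.mk (Y := q.right.left) q.hom.left
  map {q q₁} g := StructuredArrow.homMk g.right.left (by
    have hg := congrArg CommaMorphism.left (StructuredArrow.w g)
    dsimp [squareSlice] at hg ⊢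
    exact hg)
  map_id q := by apply StructuredArrow.hom_ext; rfl
  map_comp g g' := by apply StructuredArrow.hom_ext; rfl

instance starCmp_faithful : (starCmp F b' x).Faithful where
  map_injective {q q₁} g g' h := by
    have h' := congrArg CommaMorphism.right h
    apply StructuredArrow.hom_ext
    apply CostructuredArrow.hom_ext
    simpa [starCmp] using h'

instance starCmp_full : (starCmp F b' x).Full where
  map_surjective {q q₁} k := by
    have hk := StructuredArrow.w k
    dsimp [starCmp] at hk
    refine ⟨StructuredArrow.homMk (CostructuredArrow.homMk k.right (ptHomEq _ _)) ?_, ?_⟩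
    · apply CostructuredArrow.hom_ext
      dsimp [squareSlice]
      exact hk
    · apply StructuredArrow.hom_ext
      rfl

instance starCmp_essSurj : (starCmp F b' x).EssSurj where
  mem_essImage k := by
    refine ⟨StructuredArrow.mk
      (Y := CostructuredArrow.mk (Y := k.right) (ptHom ⟨⟨⟩⟩ b'))
      (CostructuredArrow.homMk k.hom (ptHomEq _ _)), ⟨Iso.refl _⟩⟩

theorem starSquare_exact (hW : IsWeakFundamentalLocalizer W)
    (hco : IsCoasphericalFunctor W F) :
    IsExactSquare W (Functor.star B) (Functor.star A) F (𝟭 PtCat.{u})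
      (𝟙 (F ⋙ Functor.star B)) := by
  intro b' x
  exact asph_src hW (starCmp F b' x) (w_of_ffes hW _) (hco x.left)

end StarSq

section BigSlice
variable {A A' B B' : Type u} [SmallCategory A] [SmallCategory A']
  [SmallCategory B] [SmallCategory B']
  (u : A ⥤ B) (u' : A' ⥤ B') (v : A' ⥤ A) (w : B' ⥤ B)
  (α : v ⋙ u ⟶ u' ⋙ w) (b' : B')

/-- The universe-`u` variant of `squareSlice` on `Comma` categories. -/
def bigSlice : Comma u' (Functor.fromPUnit.{u} b') ⥤ Comma u (Functor.fromPUnit.{u} (w.obj b')) where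
  obj m := ⟨v.obj m.left, m.right, α.app m.left ≫ w.map m.hom⟩
  map {m m₁} f := ⟨v.map f.left, f.right, by
    have hα := α.naturality f.left
    have hf := f.w
    dsimp at hα hf ⊢
    rw [← Category.assoc, hα, Category.assoc, ← Functor.map_comp]
    rw [show u'.map f.left ≫ m₁.hom = m.hom from by simpa using hf]
    simp⟩
  map_id m := by apply CommaMorphism.ext <;> simp
  map_comp f g := by apply CommaMorphism.ext <;> simp

variable (yt : Comma u (Functor.fromPUnit.{u} (w.obj b')))

def bigCmp : StructuredArrow yt (bigSlice u u' v w α b') ⥤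
    StructuredArrow (CostructuredArrow.mk yt.hom) (squareSlice u u' v w α b') where
  obj q := StructuredArrow.mk
    (Y := CostructuredArrow.mk (Y := q.right.left) q.right.hom)
    (CostructuredArrow.homMk q.hom.left (by
      have hq := q.hom.w
      dsimp [bigSlice] at hq ⊢
      exact hq.trans (Category.comp_id _)))
  map {q q₁} g := StructuredArrow.homMk
    (CostructuredArrow.homMk g.right.left (by
      have hg := g.right.w
      dsimp at hg ⊢
      simpa using hg))
    (by
      apply CostructuredArrow.hom_ext
      have hg := congrArg CommaMorphism.left (StructuredArrow.w g)
      dsimp [bigSlice, squareSlice] at hg ⊢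
      exact hg)
  map_id q := by
    apply StructuredArrow.hom_ext
    apply CostructuredArrow.hom_ext
    rfl
  map_comp g g' := by
    apply StructuredArrow.hom_ext
    apply CostructuredArrow.hom_ext
    rfl

instance bigCmp_faithful : (bigCmp u u' v w α b' yt).Faithful where
  map_injective {q q₁} g g' h := by
    have h' := congrArg (fun (ζ : (bigCmp u u' v w α b' yt).obj q ⟶
        (bigCmp u u' v w α b' yt).obj q₁) => ζ.right.left) h
    dsimp [bigCmp] at h'
    apply StructuredArrow.hom_ext
    apply CommaMorphism.ext
    · exact h'
    · exact punitHomEq _ _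

instance bigCmp_full : (bigCmp u u' v w α b' yt).Full where
  map_surjective {q q₁} k := by
    have hk1 := CostructuredArrow.w k.right
    have hk2 := congrArg CommaMorphism.left (StructuredArrow.w k)
    dsimp [bigCmp, squareSlice] at hk1 hk2
    refine ⟨StructuredArrow.homMk (⟨k.right.left, ptHom _ _, ?_⟩ :
      q.right ⟶ q₁.right) ?_, ?_⟩
    · dsimp
      rw [hk1]
      simp
    · apply CommaMorphism.ext
      · exact hk2
      · exact punitHomEq _ _
    · apply StructuredArrow.hom_ext
      apply CostructuredArrow.hom_ext
      rfl

instance bigCmp_essSurj : (bigCmp u u' v w α b' yt).EssSurj where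
  mem_essImage k := by
    let pre : Comma u' (Functor.fromPUnit.{u} b') := ⟨k.right.left, yt.right, k.right.hom⟩
    have hk := CostructuredArrow.w k.hom
    dsimp [squareSlice] at hk
    refine ⟨StructuredArrow.mk (Y := pre)
      (⟨k.hom.left, 𝟙 yt.right, ?_⟩ : yt ⟶ (bigSlice u u' v w α b').obj pre), ⟨Iso.refl _⟩⟩
    dsimp [bigSlice, pre]
    simpa using hk

theorem bigSlice_coasph (hW : IsWeakFundamentalLocalizer W)
    (hex : IsCoasphericalFunctor W (squareSlice u u' v w α b')) :
    IsCoasphericalFunctor W (bigSlice u u' v w α b') := fun yt =>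
  asph_src hW (bigCmp u u' v w α b' yt) (w_of_ffes hW _)
    (hex (CostructuredArrow.mk yt.hom))

end BigSlice

section LocDesc
variable {A A' B B' : Type u} [SmallCategory A] [SmallCategory A']
  [SmallCategory B] [SmallCategory B']
  (u : A ⥤ B) (u' : A' ⥤ B') (v : A' ⥤ A) (w : B' ⥤ B)
  (α : v ⋙ u ⟶ u' ⋙ w) (b' : B') (y : CostructuredArrow u (w.obj b'))

abbrev ldSlice := squareSlice u (Comma.snd u' (Functor.fromPUnit.{u} b'))
    (Comma.fst u' (Functor.fromPUnit.{u} b') ⋙ v) (Functor.fromPUnit.{u} b' ⋙ w)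
    (hcomp2cell α (Comma.natTrans u' (Functor.fromPUnit.{u} b'))) (⟨⟨⟩⟩ : PtCat.{u})

def ldCmp : StructuredArrow y (ldSlice u u' v w α b') ⥤
    StructuredArrow y (squareSlice u u' v w α b') where
  obj q := StructuredArrow.mk
    (Y := CostructuredArrow.mk (Y := q.right.left.left) q.right.left.hom)
    (CostructuredArrow.homMk q.hom.left (by
      have hq := CostructuredArrow.w q.hom
      dsimp [ldSlice, squareSlice, hcomp2cell] at hq
      rw [← hq]
      dsimp [squareSlice]
      simp
      rfl))
  map {q q₁} g := StructuredArrow.homMk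
    (CostructuredArrow.homMk g.right.left.left (by
      have hg := g.right.left.w
      dsimp at hg ⊢
      simpa using hg))
    (by
      apply CostructuredArrow.hom_ext
      have hg := congrArg CommaMorphism.left (StructuredArrow.w g)
      dsimp [squareSlice, hcomp2cell] at hg ⊢
      exact hg)
  map_id q := by
    apply StructuredArrow.hom_ext
    apply CostructuredArrow.hom_ext
    rfl
  map_comp g g' := by
    apply StructuredArrow.hom_ext
    apply CostructuredArrow.hom_ext
    rfl

instance ldCmp_faithful : (ldCmp u u' v w α b' y).Faithful where
  map_injective {q q₁} g g' h := by
    have h' := congrArg (fun (ζ : (ldCmp u u' v w α b' y).obj q ⟶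
        (ldCmp u u' v w α b' y).obj q₁) => ζ.right.left) h
    dsimp [ldCmp] at h'
    apply StructuredArrow.hom_ext
    apply CostructuredArrow.hom_ext
    apply CommaMorphism.ext
    · exact h'
    · exact punitHomEq' _ _

instance ldCmp_full : (ldCmp u u' v w α b' y).Full where
  map_surjective {q q₁} k := by
    have hk1 := CostructuredArrow.w k.right
    have hk2 := congrArg CommaMorphism.left (StructuredArrow.w k)
    dsimp [ldCmp, squareSlice] at hk1 hk2
    refine ⟨StructuredArrow.homMk
      (CostructuredArrow.homMk (⟨k.right.left, ptHom _ _, ?_⟩ :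
        q.right.left ⟶ q₁.right.left) (punitHomEq _ _)) ?_, ?_⟩
    · dsimp
      rw [hk1]
      simp
    · apply CostructuredArrow.hom_ext
      dsimp [squareSlice, hcomp2cell]
      exact hk2
    · apply StructuredArrow.hom_ext
      apply CostructuredArrow.hom_ext
      rfl

instance ldCmp_essSurj : (ldCmp u u' v w α b' y).EssSurj where
  mem_essImage k := by
    have hk := CostructuredArrow.w k.hom
    dsimp [squareSlice] at hk
    refine ⟨StructuredArrow.mk
      (Y := CostructuredArrow.mk
        (Y := (⟨k.right.left, ⟨⟨⟩⟩, k.right.hom⟩ : Comma u' (Functor.fromPUnit.{u} b')))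
        (ptHom ⟨⟨⟩⟩ ⟨⟨⟩⟩))
      (CostructuredArrow.homMk k.hom.left ?_), ⟨Iso.refl _⟩⟩
    dsimp [ldSlice, squareSlice, hcomp2cell]
    rw [← hk]
    simp
    rfl

end LocDesc

theorem csa_mk_congr {A B : Type u} [SmallCategory A] [SmallCategory B] {F : A ⥤ B} {b : B}
    {Y : A} {f g : F.obj Y ⟶ b} (h : f = g) :
    (CostructuredArrow.mk f : CostructuredArrow F b) = CostructuredArrow.mk g := by rw [h]

theorem hcompSlice_eq {A A' A'' B B' B'' : Type u}
    [SmallCategory A] [SmallCategory A'] [SmallCategory A'']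
    [SmallCategory B] [SmallCategory B'] [SmallCategory B'']
    (u : A ⥤ B) (u' : A' ⥤ B') (u'' : A'' ⥤ B'')
    (v : A' ⥤ A) (w : B' ⥤ B) (v' : A'' ⥤ A') (w' : B'' ⥤ B')
    (α : v ⋙ u ⟶ u' ⋙ w) (α' : v' ⋙ u' ⟶ u'' ⋙ w') (b'' : B'') :
    squareSlice u u'' (v' ⋙ v) (w' ⋙ w) (hcomp2cell α α') b'' =
      squareSlice u' u'' v' w' α' b'' ⋙ squareSlice u u' v w α (w'.obj b'') := by
  refine CategoryTheory.Functor.ext (fun X => ?_) (fun X Y f => ?_)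
  · show CostructuredArrow.mk (Y := v.obj (v'.obj X.left)) _ =
      CostructuredArrow.mk (Y := v.obj (v'.obj X.left)) _
    refine csa_mk_congr ?_
    dsimp [squareSlice, hcomp2cell]
    simp
  · apply CostructuredArrow.hom_ext
    simp [squareSlice, CostructuredArrow.eqToHom_left]
    erw [CostructuredArrow.eqToHom_left, CostructuredArrow.eqToHom_left]
    simp

theorem exact_hcomp (hW : IsWeakFundamentalLocalizer W) {A A' A'' B B' B'' : Type u}
    [SmallCategory A] [SmallCategory A'] [SmallCategory A'']
    [SmallCategory B] [SmallCategory B'] [SmallCategory B'']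
    (u : A ⥤ B) (u' : A' ⥤ B') (u'' : A'' ⥤ B'')
    (v : A' ⥤ A) (w : B' ⥤ B) (v' : A'' ⥤ A') (w' : B'' ⥤ B')
    (α : v ⋙ u ⟶ u' ⋙ w) (α' : v' ⋙ u' ⟶ u'' ⋙ w')
    (h1 : IsExactSquare W u u' v w α) (h2 : IsExactSquare W u' u'' v' w' α') :
    IsExactSquare W u u'' (v' ⋙ v) (w' ⋙ w) (hcomp2cell α α') := by
  intro b''
  rw [hcompSlice_eq]
  exact coasph_comp hW _ _ (h2 b'') (h1 (w'.obj b''))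

theorem exact_locdesc (hW : IsWeakFundamentalLocalizer W) {A A' B B' : Type u}
    [SmallCategory A] [SmallCategory A'] [SmallCategory B] [SmallCategory B']
    (u : A ⥤ B) (u' : A' ⥤ B') (v : A' ⥤ A) (w : B' ⥤ B) (α : v ⋙ u ⟶ u' ⋙ w)
    (hloc : ∀ b' : B', IsExactSquare W u (Comma.snd u' (Functor.fromPUnit.{u} b'))
      (Comma.fst u' (Functor.fromPUnit.{u} b') ⋙ v) (Functor.fromPUnit.{u} b' ⋙ w)
      (hcomp2cell α (Comma.natTrans u' (Functor.fromPUnit.{u} b')))) :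
    IsExactSquare W u u' v w α := by
  intro b' y
  exact asph_tgt hW (ldCmp u u' v w α b' y) (w_of_ffes hW _) (hloc b' ⟨⟨⟩⟩ y)


section Final
variable {W : FunctorClass.{u}}

theorem catSquare_eq {A' A B' B : Type u} [SmallCategory A'] [SmallCategory A]
    [SmallCategory B'] [SmallCategory B]
    {u : A ⥤ B} {u' : A' ⥤ B'} {v : A' ⥤ A} {w₁ w₂ : B' ⥤ B}
    {α₁ : v ⋙ u ⟶ u' ⋙ w₁} {α₂ : v ⋙ u ⟶ u' ⋙ w₂}
    (hw : w₁ = w₂)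
    (happ : ∀ x : A', α₁.app x ≫ eqToHom (by rw [hw]) = α₂.app x) :
    (⟨u, u', v, w₁, α₁⟩ : CatSquare.{u}) = ⟨u, u', v, w₂, α₂⟩ := by
  subst hw
  have : α₁ = α₂ := by
    ext x
    simpa using happ x
  rw [this]


end Final
end HelperB

theorem statement12 (W : FunctorClass.{u}) (hW : IsWeakFundamentalLocalizer W) :
    (StableHComp (CatSquare.IsExact W)
      ∧ LocalDescent (CatSquare.IsExact W)
      ∧ (∀ {A B B' : Type u} [SmallCategory A] [SmallCategory B] [SmallCategory B']
          (u : A ⥤ B) (w : B' ⥤ B), (commaSquare u w).IsExact W)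
      ∧ (∀ {A B : Type u} [SmallCategory A] [SmallCategory B] (F : A ⥤ B),
          IsCoasphericalFunctor W F → (starSquare F).IsExact W))
    ∧ ∀ Q : CatSquare.{u} → Prop, StableHComp Q → LocalDescent Q →
        (∀ {A B B' : Type u} [SmallCategory A] [SmallCategory B] [SmallCategory B']
          (u : A ⥤ B) (w : B' ⥤ B), Q (commaSquare u w)) →
        (∀ {A B : Type u} [SmallCategory A] [SmallCategory B] (F : A ⥤ B),
          IsCoasphericalFunctor W F → Q (starSquare F)) →
        ∀ S : CatSquare.{u}, S.IsExact W → Q S := by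
  constructor
  · refine ⟨?_, ?_, ?_, ?_⟩
    · intro A A' A'' B B' B'' _ _ _ _ _ _ u u' u'' v w v' w' α α' h1 h2
      exact exact_hcomp hW u u' u'' v w v' w' α α' h1 h2
    · intro A A' B B' _ _ _ _ u u' v w α hloc
      exact exact_locdesc hW u u' v w α hloc
    · intro A B B' _ _ _ u w
      exact commaSquare_exact w u hW
    · intro A B _ _ F hF
      exact starSquare_exact F hW hF
  · intro Q hcomp hdesc hcomma hstar S hS
    obtain ⟨u, u', v, w, α⟩ := S
    apply hdesc
    intro b'
    have hco : IsCoasphericalFunctor W (bigSlice u u' v w α b') :=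
      bigSlice_coasph u u' v w α b' hW (hS b')
    have hQ := hcomp u (Comma.snd u (Functor.fromPUnit.{u} (w.obj b')))
      (Functor.star (Comma u' (Functor.fromPUnit.{u} b')))
      (Comma.fst u (Functor.fromPUnit.{u} (w.obj b'))) (Functor.fromPUnit.{u} (w.obj b'))
      (bigSlice u u' v w α b') (𝟭 PtCat.{u})
      (Comma.natTrans u (Functor.fromPUnit.{u} (w.obj b')))
      (𝟙 (bigSlice u u' v w α b' ⋙ Functor.star (Comma u (Functor.fromPUnit.{u} (w.obj b')))))
      (hcomma u (Functor.fromPUnit.{u} (w.obj b'))) (hstar (bigSlice u u' v w α b') hco)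
    have heq : (⟨u, Functor.star (Comma u' (Functor.fromPUnit.{u} b')),
        bigSlice u u' v w α b' ⋙ Comma.fst u (Functor.fromPUnit.{u} (w.obj b')),
        𝟭 PtCat.{u} ⋙ Functor.fromPUnit.{u} (w.obj b'),
        hcomp2cell (Comma.natTrans u (Functor.fromPUnit.{u} (w.obj b')))
          (𝟙 (bigSlice u u' v w α b' ⋙
            Functor.star (Comma u (Functor.fromPUnit.{u} (w.obj b')))))⟩ : CatSquare.{u}) =
        ⟨u, Comma.snd u' (Functor.fromPUnit.{u} b'),
          Comma.fst u' (Functor.fromPUnit.{u} b') ⋙ v, Functor.fromPUnit.{u} b' ⋙ w,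
          hcomp2cell α (Comma.natTrans u' (Functor.fromPUnit.{u} b'))⟩ := by
      refine catSquare_eq ?_ ?_
      · refine CategoryTheory.Functor.ext (fun X => rfl) (fun X Y f => ?_)
        dsimp [Functor.fromPUnit]
        simp
      · intro x
        dsimp [hcomp2cell, bigSlice, Functor.fromPUnit]
        simp
        exact congrArg (α.app x.left ≫ ·) (Category.comp_id _)
    exact heq ▸ hQ

end Paper
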